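/- Let x be a sequence of length m with distinct elements and let i, j ∈ {1,...,m-1} with i ≠ j, x[i] ≠ x[i+1], x[j] ≠ x[j+1]. Then the Cartesian trees of τ(x,i) and τ(x,j) are distinct, i.e., swaps at different positions never produce the same Cartesian tree. -/

import Mathlib

/-- Binary tree shapes (Cartesian trees are determined by their shape). -/
inductive BTree : Type
  | nil : BTree
  | node : BTree → BTree → BTree
deriving DecidableEq

namespace BTree

/-- Number of nodes. -/
def size : BTree → ℕ
  | nil => 0
  | node l r => size l + size r + 1

/-- Length of the leftmost path. -/
def LMP : BTree → ℕ
  | nil => 0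
  | node l _ => LMP l + 1

/-- Length of the rightmost path. -/
def RMP : BTree → ℕ
  | nil => 0
  | node _ r => RMP r + 1

end BTree

/-- Minimum value of a list (0 for the empty list). -/
def listMin : List ℤ → ℤ
  | [] => 0
  | a :: t => t.foldl min a

/-- Index (0-based) of the minimum of a list. -/
def minIdx (l : List ℤ) : ℕ := l.idxOf (listMin l)

/-- Cartesian tree of a list, with fuel for termination. -/
def ctreeAux : ℕ → List ℤ → BTree
  | 0, _ => .nil
  | _ + 1, [] => .nil
  | n + 1, a :: t =>
      let g := minIdx (a :: t)
      .node (ctreeAux n ((a :: t).take g)) (ctreeAux n ((a :: t).drop (g + 1)))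

/-- Cartesian tree of a list: the root is the position of the minimum,
its subtrees are the Cartesian trees of the prefix and suffix around it. -/
def ctreeL (l : List ℤ) : BTree := ctreeAux l.length l

/-- The factor x[a..b] (1-based positions) of a sequence, as a list. -/
def seqList (x : ℕ → ℤ) (a b : ℕ) : List ℤ :=
  (List.range (b + 1 - a)).map (fun k => x (a + k))

/-- Cartesian tree of the sequence x[1..m]. -/
def ctreeOf (m : ℕ) (x : ℕ → ℤ) : BTree := ctreeL (seqList x 1 m)

/-- Positions j < h (1-based) with x[j] < x[h]. -/
def PDset (x : ℕ → ℤ) (h : ℕ) : Finset ℕ :=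
  (Finset.Ico 1 h).filter (fun j => x j < x h)

/-- Parent-distance table: PD_x[h] = h - max{j < h : x[j] < x[h]}, 0 if no such j. -/
def PD (x : ℕ → ℤ) (h : ℕ) : ℕ :=
  if hs : (PDset x h).Nonempty then h - (PDset x h).max' hs else 0

/-- Positions h < j ≤ m with x[j] < x[h]. -/
def RPDset (m : ℕ) (x : ℕ → ℤ) (h : ℕ) : Finset ℕ :=
  (Finset.Ioc h m).filter (fun j => x j < x h)

/-- Reverse parent-distance table: RPD_x[h] = min{j > h : x[j] < x[h]} - h, 0 if no such j. -/
def RPD (m : ℕ) (x : ℕ → ℤ) (h : ℕ) : ℕ :=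
  if hs : (RPDset m x h).Nonempty then (RPDset m x h).min' hs - h else 0

/-- Referent of h: the smallest position j > h with x[j] < x[h], or -1 if none. -/
def refD (m : ℕ) (x : ℕ → ℤ) (h : ℕ) : ℤ :=
  if hs : (RPDset m x h).Nonempty then ((RPDset m x h).min' hs : ℤ) else -1

/-- Skipped-number table: SN_x[h] is the number of nodes on the rightmost path of the
left subtree of node h in C(x), i.e. the number of positions whose referent is h. -/
def SN (m : ℕ) (x : ℕ → ℤ) (h : ℕ) : ℕ :=
  ((Finset.Ico 1 h).filter (fun j => refD m x j = (h : ℤ))).card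

/-- The swap τ(x,i): exchange the entries at positions i and i+1. -/
def swapAt (x : ℕ → ℤ) (i : ℕ) : ℕ → ℤ :=
  fun j => if j = i then x (i + 1) else if j = i + 1 then x i else x j

/-- ng(T,i): the Cartesian trees obtained from a sequence realizing T by one swap
at position i (valid positions are 1 ≤ i ≤ m-1). -/
def ngi (m : ℕ) (T : BTree) (i : ℕ) : Set BTree :=
  { S | 1 ≤ i ∧ i + 1 ≤ m ∧ ∃ x : ℕ → ℤ, Set.InjOn x (Set.Icc 1 m) ∧
        ctreeOf m x = T ∧ S = ctreeOf m (swapAt x i) }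

/-- ng(T): the swap neighbourhood of T. -/
def ng (m : ℕ) (T : BTree) : Set BTree := ⋃ i, ngi m T i

/-- Number of permutations of {1,...,n} whose Cartesian tree is A. -/
noncomputable def permCount (n : ℕ) (A : BTree) : ℕ :=
  Set.ncard { σ : Equiv.Perm (Fin n) |
    ctreeL (List.ofFn (fun k : Fin n => ((σ k : ℕ) : ℤ) + 1)) = A }

/-- Product over all nodes t of A of the size of the subtree rooted at t. -/
def hookProd : BTree → ℕ
  | .nil => 1
  | .node l r => (BTree.node l r).size * hookProd l * hookProd r


/-! ### Auxiliary development for stmt6 -/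

section Stmt6Aux

lemma foldl_min_le_init (t : List ℤ) : ∀ a : ℤ, t.foldl min a ≤ a := by
  induction t with
  | nil => intro a; simp
  | cons b t ih =>
    intro a
    simpa using le_trans (ih (min a b)) (min_le_left a b)

lemma foldl_min_le_mem (t : List ℤ) : ∀ a : ℤ, ∀ b ∈ t, t.foldl min a ≤ b := by
  induction t with
  | nil => simp
  | cons c t ih =>
    intro a b hb
    rcases List.mem_cons.1 hb with rfl | hb
    · exact le_trans (foldl_min_le_init t _) (min_le_right a b)
    · exact ih _ _ hb

lemma foldl_min_mem (t : List ℤ) : ∀ a : ℤ, t.foldl min a = a ∨ t.foldl min a ∈ t := by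
  induction t with
  | nil => simp
  | cons c t ih =>
    intro a
    rcases ih (min a c) with h | h
    · rcases le_total a c with hac | hac
      · left; simpa [min_eq_left hac] using h
      · right
        rw [List.foldl_cons, h, min_eq_right hac]
        exact List.mem_cons_self
    · right; exact List.mem_cons_of_mem _ h

lemma listMin_le (l : List ℤ) (a : ℤ) (h : a ∈ l) : listMin l ≤ a := by
  cases l with
  | nil => simp at h
  | cons b t =>
    rcases List.mem_cons.1 h with rfl | h
    · exact foldl_min_le_init t a
    · exact foldl_min_le_mem t b a h

lemma listMin_mem (l : List ℤ) (h : l ≠ []) : listMin l ∈ l := by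
  cases l with
  | nil => simp at h
  | cons b t =>
    rcases foldl_min_mem t b with h' | h'
    · rw [listMin, h']; exact List.mem_cons_self
    · exact List.mem_cons_of_mem _ h'

lemma minIdx_lt (l : List ℤ) (h : l ≠ []) : minIdx l < l.length :=
  List.idxOf_lt_length_iff.2 (listMin_mem l h)

lemma getElem_minIdx (l : List ℤ) (h : l ≠ []) :
    l[minIdx l]'(minIdx_lt l h) = listMin l :=
  List.idxOf_get (h := List.idxOf_lt_length_iff.2 (listMin_mem l h))

lemma ctreeAux_nil (n : ℕ) : ctreeAux n [] = .nil := by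
  cases n <;> rfl

lemma ctreeAux_cons (n : ℕ) (a : ℤ) (t : List ℤ) :
    ctreeAux (n + 1) (a :: t) =
      .node (ctreeAux n ((a :: t).take (minIdx (a :: t))))
            (ctreeAux n ((a :: t).drop (minIdx (a :: t) + 1))) := rfl

lemma ctreeAux_congr (N : ℕ) : ∀ l : List ℤ, l.length ≤ N →
    ∀ n n' : ℕ, l.length ≤ n → l.length ≤ n' → ctreeAux n l = ctreeAux n' l := by
  induction N with
  | zero =>
    intro l hl n n' _ _
    have : l = [] := List.length_eq_zero_iff.1 (Nat.le_zero.1 hl)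
    subst this
    rw [ctreeAux_nil, ctreeAux_nil]
  | succ N ih =>
    intro l hl n n' hn hn'
    cases l with
    | nil => rw [ctreeAux_nil, ctreeAux_nil]
    | cons a t =>
      have hpos : 0 < (a :: t).length := by simp
      obtain ⟨n₁, rfl⟩ : ∃ n₁, n = n₁ + 1 := ⟨n - 1, by omega⟩
      obtain ⟨n₂, rfl⟩ : ∃ n₂, n' = n₂ + 1 := ⟨n' - 1, by omega⟩
      have hg : minIdx (a :: t) < t.length + 1 := minIdx_lt _ (by simp)
      have hl2 : t.length + 1 ≤ N + 1 := by simpa using hl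
      have hn2 : t.length + 1 ≤ n₁ + 1 := by simpa using hn
      have hn2' : t.length + 1 ≤ n₂ + 1 := by simpa using hn'
      rw [ctreeAux_cons, ctreeAux_cons]
      have e1 : ((a :: t).take (minIdx (a :: t))).length = min (minIdx (a :: t)) (t.length + 1) := by
        simp [List.length_take]
      have e2 : ((a :: t).drop (minIdx (a :: t) + 1)).length = t.length + 1 - (minIdx (a :: t) + 1) := by
        simp [List.length_drop]
      rw [ih _ (by rw [e1]; omega) n₁ n₂ (by rw [e1]; omega) (by rw [e1]; omega),
          ih _ (by rw [e2]; omega) n₁ n₂ (by rw [e2]; omega) (by rw [e2]; omega)]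

lemma ctreeAux_eq_ctreeL (n : ℕ) (l : List ℤ) (h : l.length ≤ n) :
    ctreeAux n l = ctreeL l :=
  ctreeAux_congr l.length l le_rfl n l.length h le_rfl

lemma ctreeL_cons (a : ℤ) (t : List ℤ) :
    ctreeL (a :: t) =
      .node (ctreeL ((a :: t).take (minIdx (a :: t))))
            (ctreeL ((a :: t).drop (minIdx (a :: t) + 1))) := by
  have hg : minIdx (a :: t) < t.length + 1 := minIdx_lt _ (by simp)
  rw [ctreeL, show (a :: t).length = t.length + 1 from rfl, ctreeAux_cons]
  rw [ctreeAux_eq_ctreeL _ _ (by rw [List.length_take]; simp <;> omega),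
      ctreeAux_eq_ctreeL _ _ (by rw [List.length_drop]; simp <;> omega)]

lemma ctreeL_eq_nil_iff (l : List ℤ) : ctreeL l = .nil ↔ l = [] := by
  cases l with
  | nil => simp [ctreeL, ctreeAux_nil]
  | cons a t => rw [ctreeL_cons]; simp

/-- Descent sequence: the list of comparisons of adjacent entries. -/
def descs : List ℤ → List Bool
  | a :: b :: t => decide (a < b) :: descs (b :: t)
  | _ => []

@[simp] lemma descs_nil : descs [] = [] := rfl
@[simp] lemma descs_single (a : ℤ) : descs [a] = [] := rfl
@[simp] lemma descs_cons₂ (a b : ℤ) (t : List ℤ) :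
    descs (a :: b :: t) = decide (a < b) :: descs (b :: t) := rfl

lemma descs_length (l : List ℤ) : (descs l).length = l.length - 1 := by
  induction l with
  | nil => rfl
  | cons a t ih =>
    cases t with
    | nil => rfl
    | cons b t' => simp [ih] <;> omega

lemma descs_getElem : ∀ (l : List ℤ) (k : ℕ) (h : k + 1 < l.length),
    (descs l)[k]'(by rw [descs_length]; omega) =
      decide (l[k]'(by omega) < l[k + 1]'h) := by
  intro l
  induction l with
  | nil => intro k h; simp at h
  | cons a t ih =>
    intro k h
    cases t with
    | nil => simp at h
    | cons b t' =>
      cases k with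
      | zero => simp
      | succ k' =>
        have h' : k' + 1 < (b :: t').length := by simpa using h
        simpa using ih k' h'

lemma descs_cons_of_ne (a : ℤ) (v : List ℤ) (hv : v ≠ []) :
    descs (a :: v) = decide (a < v.head hv) :: descs v := by
  cases v with
  | nil => exact absurd rfl hv
  | cons b v' => simp; congr

lemma descs_append (u v : List ℤ) (hu : u ≠ []) (hv : v ≠ []) :
    descs (u ++ v) = descs u ++ decide (u.getLast hu < v.head hv) :: descs v := by
  induction u with
  | nil => exact absurd rfl hu
  | cons a u' ih =>
    cases u' with
    | nil =>
      cases v with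
      | nil => exact absurd rfl hv
      | cons b v' => simp; congr
    | cons c u'' =>
      have h' : (c :: u'') ≠ [] := by simp
      have : (a :: c :: u'') ++ v = a :: ((c :: u'') ++ v) := rfl
      rw [this]
      have hne : (c :: u'') ++ v = c :: (u'' ++ v) := rfl
      rw [hne, descs_cons₂]
      rw [← hne, ih h']
      rw [List.getLast_cons h']
      simp

/-- Descent sequence read off from a binary tree shape. -/
def dlist : BTree → List Bool
  | .nil => []
  | .node l r =>
      dlist l ++ ((if l = .nil then [] else [false]) ++
        ((if r = .nil then [] else [true]) ++ dlist r))

lemma dlist_ctreeL (N : ℕ) : ∀ l : List ℤ, l.length ≤ N → l.Nodup →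
    dlist (ctreeL l) = descs l := by
  induction N with
  | zero =>
    intro l hl _
    have : l = [] := List.length_eq_zero_iff.1 (Nat.le_zero.1 hl)
    subst this; rfl
  | succ N ih =>
    intro l hl hnd
    cases l with
    | nil => rfl
    | cons a t =>
      set g := minIdx (a :: t) with hgdef
      have hg : g < (a :: t).length := minIdx_lt _ (by simp)
      set u := (a :: t).take g with hudef
      set w := (a :: t).drop (g + 1) with hwdef
      set m₀ := (a :: t)[g]'hg with hm₀def
      have hm₀ : m₀ = listMin (a :: t) := getElem_minIdx _ (by simp)
      have hsplit : a :: t = u ++ m₀ :: w := by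
        rw [hudef, hwdef, hm₀def, ← List.drop_eq_getElem_cons hg,
          List.take_append_drop]
      -- lengths
      have hul : u.length = g := by
        rw [hudef, List.length_take]; omega
      have hwl : w.length = (a :: t).length - (g + 1) := by
        rw [hwdef, List.length_drop]
      -- nodup facts
      have hnd' := hnd
      rw [hsplit] at hnd'
      have hndu : u.Nodup := hnd'.of_append_left
      have hndmw : (m₀ :: w).Nodup := hnd'.of_append_right
      have hndw : w.Nodup := (List.nodup_cons.1 hndmw).2
      have hm₀u : m₀ ∉ u := fun hc =>
        (List.disjoint_of_nodup_append hnd') hc (List.mem_cons_self)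
      have hm₀w : m₀ ∉ w := (List.nodup_cons.1 hndmw).1
      -- strict minimality
      have hlt_u : ∀ b ∈ u, m₀ < b := by
        intro b hb
        have hbl : b ∈ a :: t := by rw [hsplit]; exact List.mem_append_left _ hb
        have h1 : m₀ ≤ b := hm₀ ▸ listMin_le _ _ hbl
        rcases h1.lt_or_eq with h | h
        · exact h
        · exact absurd (h ▸ hb) hm₀u
      have hlt_w : ∀ b ∈ w, m₀ < b := by
        intro b hb
        have hbl : b ∈ a :: t := by
          rw [hsplit]; exact List.mem_append_right _ (List.mem_cons_of_mem _ hb)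
        have h1 : m₀ ≤ b := hm₀ ▸ listMin_le _ _ hbl
        rcases h1.lt_or_eq with h | h
        · exact h
        · exact absurd (h ▸ hb) hm₀w
      -- recursion
      rw [ctreeL_cons, ← hgdef, ← hudef, ← hwdef]
      have hlen : (a :: t).length = t.length + 1 := rfl
      have hiu : dlist (ctreeL u) = descs u := ih u (by omega) hndu
      have hiw : dlist (ctreeL w) = descs w := ih w (by omega) hndw
      rw [dlist, hiu, hiw]
      rw [show descs (a :: t) = descs (u ++ m₀ :: w) from by rw [← hsplit]]
      rcases eq_or_ne u [] with hu | hu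
      · rw [hu]
        rcases eq_or_ne w [] with hw | hw
        · rw [hw]; simp [ctreeL_eq_nil_iff]
        · have hb : m₀ < w.head hw := hlt_w _ (List.head_mem hw)
          rw [List.nil_append, descs_cons_of_ne m₀ w hw]
          simp [ctreeL_eq_nil_iff, hw, hb]
      · have hvne : (m₀ :: w) ≠ [] := by simp
        rw [descs_append u (m₀ :: w) hu hvne]
        have hlast : decide (u.getLast hu < (m₀ :: w).head hvne) = false := by
          simp only [List.head_cons, decide_eq_false_iff_not, not_lt]
          exact decide_eq_false (not_lt.2 (hlt_u _ (List.getLast_mem hu)).le)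
        rw [hlast]
        rw [if_neg (show ¬ ctreeL u = .nil from by rw [ctreeL_eq_nil_iff]; exact hu)]
        rcases eq_or_ne w [] with hw | hw
        · rw [hw]; simp [ctreeL_eq_nil_iff]
        · have hb : m₀ < w.head hw := hlt_w _ (List.head_mem hw)
          rw [descs_cons_of_ne m₀ w hw]
          rw [if_neg (show ¬ ctreeL w = .nil from by rw [ctreeL_eq_nil_iff]; exact hw)]
          simp [hb]

lemma seqList_length (y : ℕ → ℤ) (m : ℕ) : (seqList y 1 m).length = m := by
  simp [seqList]

lemma seqList_getElem (y : ℕ → ℤ) (m k : ℕ) (h : k < m) :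
    (seqList y 1 m)[k]'(by rw [seqList_length]; exact h) = y (1 + k) := by
  simp [seqList]

lemma seqList_nodup (y : ℕ → ℤ) (m : ℕ) (hy : Set.InjOn y (Set.Icc 1 m)) :
    (seqList y 1 m).Nodup := by
  have hnd : (List.range (m + 1 - 1)).Nodup := List.nodup_range
  refine hnd.map_on ?_
  intro k1 h1 k2 h2 he
  simp only [List.mem_range] at h1 h2
  have e := hy (show (1 + k1) ∈ Set.Icc 1 m from ⟨by omega, by omega⟩)
    (show (1 + k2) ∈ Set.Icc 1 m from ⟨by omega, by omega⟩) he
  omega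

lemma swapAt_injOn (m i : ℕ) (x : ℕ → ℤ) (hx : Set.InjOn x (Set.Icc 1 m))
    (hi1 : 1 ≤ i) (him : i + 1 ≤ m) : Set.InjOn (swapAt x i) (Set.Icc 1 m) := by
  have hmi : i ∈ Set.Icc 1 m := ⟨hi1, by omega⟩
  have hmi1 : i + 1 ∈ Set.Icc 1 m := ⟨by omega, him⟩
  intro a ha b hb h
  unfold swapAt at h
  split_ifs at h <;>
    first
      | omega
      | (have := hx (by first | exact hmi | exact hmi1 | exact ha)
            (by first | exact hmi | exact hmi1 | exact hb) h; omega)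

lemma descs_of_ctree_eq (m : ℕ) (y₁ y₂ : ℕ → ℤ)
    (h1 : Set.InjOn y₁ (Set.Icc 1 m)) (h2 : Set.InjOn y₂ (Set.Icc 1 m))
    (h : ctreeOf m y₁ = ctreeOf m y₂) :
    descs (seqList y₁ 1 m) = descs (seqList y₂ 1 m) := by
  have e1 : dlist (ctreeL (seqList y₁ 1 m)) = descs (seqList y₁ 1 m) :=
    dlist_ctreeL (seqList y₁ 1 m).length _ le_rfl (seqList_nodup _ _ h1)
  have e2 : dlist (ctreeL (seqList y₂ 1 m)) = descs (seqList y₂ 1 m) :=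
    dlist_ctreeL (seqList y₂ 1 m).length _ le_rfl (seqList_nodup _ _ h2)
  rw [← e1, ← e2]
  unfold ctreeOf at h
  rw [h]

lemma key_iff (m : ℕ) (y₁ y₂ : ℕ → ℤ)
    (h : descs (seqList y₁ 1 m) = descs (seqList y₂ 1 m))
    (k : ℕ) (hk : k + 1 < m) :
    (y₁ (1 + k) < y₁ (1 + (k + 1)) ↔ y₂ (1 + k) < y₂ (1 + (k + 1))) := by
  have hl1 : k + 1 < (seqList y₁ 1 m).length := by rw [seqList_length]; exact hk
  have hl2 : k + 1 < (seqList y₂ 1 m).length := by rw [seqList_length]; exact hk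
  have g1 := descs_getElem (seqList y₁ 1 m) k hl1
  have g2 := descs_getElem (seqList y₂ 1 m) k hl2
  rw [seqList_getElem y₁ m k (by omega), seqList_getElem y₁ m (k+1) (by omega)] at g1
  rw [seqList_getElem y₂ m k (by omega), seqList_getElem y₂ m (k+1) (by omega)] at g2
  have : (descs (seqList y₁ 1 m))[k]'(by rw [descs_length]; omega) =
      (descs (seqList y₂ 1 m))[k]'(by rw [descs_length]; omega) := by
    simp only [h]
  rw [g1, g2] at this
  exact decide_eq_decide.1 this

lemma stmt6_aux (m i j : ℕ) (x : ℕ → ℤ) (hx : Set.InjOn x (Set.Icc 1 m))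
    (hi1 : 1 ≤ i) (him : i + 1 ≤ m) (hjm : j + 1 ≤ m)
    (hij : i < j) (hxi : x i ≠ x (i + 1)) :
    ctreeOf m (swapAt x i) ≠ ctreeOf m (swapAt x j) := by
  intro heq
  set y₁ := swapAt x i with hy₁
  set y₂ := swapAt x j with hy₂
  have hinj1 : Set.InjOn y₁ (Set.Icc 1 m) := swapAt_injOn m i x hx hi1 him
  have hinj2 : Set.InjOn y₂ (Set.Icc 1 m) := swapAt_injOn m j x hx (by omega) hjm
  have hdesc := descs_of_ctree_eq m y₁ y₂ hinj1 hinj2 heq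
  -- values
  have v1i : y₁ i = x (i + 1) := by rw [hy₁]; unfold swapAt; rw [if_pos rfl]
  have v1i1 : y₁ (i + 1) = x i := by
    rw [hy₁]; unfold swapAt; rw [if_neg (by omega), if_pos rfl]
  have v2i : y₂ i = x i := by
    rw [hy₂]; unfold swapAt; rw [if_neg (by omega), if_neg (by omega)]
  rcases eq_or_lt_of_le (show i + 1 ≤ j from hij) with hadj | hfar
  · -- j = i + 1
    subst hadj
    have v2i1 : y₂ (i + 1) = x (i + 2) := by
      rw [hy₂]; unfold swapAt; rw [if_pos rfl]
    have v1i2 : y₁ (i + 2) = x (i + 2) := by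
      rw [hy₁]; unfold swapAt; rw [if_neg (by omega), if_neg (by omega)]
    have v2i2 : y₂ (i + 2) = x (i + 1) := by
      rw [hy₂]; unfold swapAt; rw [if_neg (by omega), if_pos (by omega)]
    have kA := key_iff m y₁ y₂ hdesc (i - 1) (by omega)
    have kB := key_iff m y₁ y₂ hdesc i (by omega)
    rw [show 1 + (i - 1) = i from by omega, show 1 + (i - 1 + 1) = i + 1 from by omega] at kA
    rw [show 1 + i = i + 1 from by omega, show 1 + (i + 1) = i + 2 from by omega] at kB
    rw [v1i, v1i1, v2i, v2i1] at kA
    rw [v1i1, v1i2, v2i1, v2i2] at kB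
    rcases lt_or_gt_of_ne hxi with h | h
    · have h2 : ¬ x (i + 1) < x i := not_lt.2 h.le
      have h3 : ¬ x i < x (i + 2) := fun hc => h2 (kA.mpr hc)
      have h4 : ¬ x (i + 2) < x (i + 1) := fun hc => h3 (kB.mpr hc)
      push_neg at h3 h4
      linarith
    · have h3 : x i < x (i + 2) := kA.mp h
      have h4 : x (i + 2) < x (i + 1) := kB.mp h3
      linarith
  · -- j ≥ i + 2
    have v2i1 : y₂ (i + 1) = x (i + 1) := by
      rw [hy₂]; unfold swapAt; rw [if_neg (by omega), if_neg (by omega)]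
    have kA := key_iff m y₁ y₂ hdesc (i - 1) (by omega)
    rw [show 1 + (i - 1) = i from by omega, show 1 + (i - 1 + 1) = i + 1 from by omega] at kA
    rw [v1i, v1i1, v2i, v2i1] at kA
    rcases lt_or_gt_of_ne hxi with h | h
    · exact absurd (kA.mpr h) (not_lt.2 h.le)
    · exact absurd h (not_lt.2 (kA.mp h).le)

end Stmt6Aux


theorem stmt6 (m i j : ℕ) (x : ℕ → ℤ) (hx : Set.InjOn x (Set.Icc 1 m))
    (hi1 : 1 ≤ i) (him : i + 1 ≤ m) (hj1 : 1 ≤ j) (hjm : j + 1 ≤ m)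
    (hij : i ≠ j) (hxi : x i ≠ x (i + 1)) (hxj : x j ≠ x (j + 1)) :
    ctreeOf m (swapAt x i) ≠ ctreeOf m (swapAt x j) := by
  rcases Nat.lt_or_ge i j with h | h
  · exact stmt6_aux m i j x hx hi1 him hjm h hxi
  · have h' : j < i := by omega
    exact (stmt6_aux m j i x hx hj1 hjm him h' hxj).symm
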